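/- Let (M,d) be a compact metric space, f : M → M a homeomorphism satisfying the Anosov Closing property, and A : M → M(d,ℝ) an α-Hölder continuous map. Suppose all Lyapunov exponents of (f,A) at periodic points are uniformly bounded from below: there exists c ∈ ℝ such that for every periodic point p of f with period n and every complex eigenvalue z of the matrix Aⁿ(p), one has |z| ≥ e^{cn}. Then for every f-invariant Borel probability measure μ on M, the matrix A(x) is invertible (A(x) ∈ GL(d,ℝ)) for μ-almost every x ∈ M. -/

import Mathlib

open Filter MeasureTheory Topology

/-- Operator norm (w.r.t. the Euclidean norm) of a square real matrix. -/
noncomputable def matNorm {m : Type*} [Fintype m] [DecidableEq m] (B : Matrix m m ℝ) : ℝ :=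
  ‖LinearMap.toContinuousLinearMap (Matrix.toEuclideanLin B)‖

/-- The cocycle generated by `A` over `f`: `Aⁿ(x) = A(f^{n-1}x) ⋯ A(f x) A(x)`. -/
def cocycle {M : Type*} {m : Type*} [Fintype m] [DecidableEq m]
    (f : M → M) (A : M → Matrix m m ℝ) : ℕ → M → Matrix m m ℝ
  | 0, _ => 1
  | n + 1, x => cocycle f A n (f x) * A x

/-- `log` with values in `[-∞, ∞)`, with `log r = -∞` for `r ≤ 0`. -/
noncomputable def elog (r : ℝ) : EReal := if r ≤ 0 then ⊥ else ((Real.log r : ℝ) : EReal)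

/-- The integral `∫ log g dμ ∈ [-∞,∞)` of the `[-∞,∞)`-valued function `log ∘ g` (for `g ≥ 0`),
defined via monotone truncations. -/
noncomputable def elogIntegral {M : Type*} [MeasurableSpace M] (μ : Measure M) (g : M → ℝ) :
    EReal :=
  ⨅ m : ℕ, (((∫ x, (if g x ≤ 0 then -(m : ℝ) else max (Real.log (g x)) (-(m : ℝ))) ∂μ) : ℝ) : EReal)

/-- The largest Lyapunov exponent `λ₁(A,μ) = inf_{n ≥ 1} (1/n) ∫ log ‖Aⁿ(x)‖ dμ(x) ∈ [-∞,∞)`. -/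
noncomputable def lyapMax {M : Type*} [MeasurableSpace M] {m : Type*} [Fintype m] [DecidableEq m]
    (f : M → M) (A : M → Matrix m m ℝ) (μ : Measure M) : EReal :=
  ⨅ n : ℕ, (((((n : ℝ) + 1)⁻¹ : ℝ)) : EReal) *
    elogIntegral μ (fun x => matNorm (cocycle f A (n + 1) x))

/-- The spectral radius of a real square matrix: the largest modulus of its complex
eigenvalues. -/
noncomputable def specRad {m : Type*} [Fintype m] [DecidableEq m] (B : Matrix m m ℝ) : ℝ :=
  sSup ((‖·‖) '' spectrum ℂ (B.map (fun r => (r : ℂ))))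

/-- The largest Lyapunov exponent of the cocycle at a periodic point of period `n`:
`(1/n) log (spectral radius of Aⁿ(p)) ∈ [-∞,∞)`. -/
noncomputable def lyapMaxPeriodic {M : Type*} {m : Type*} [Fintype m] [DecidableEq m]
    (f : M → M) (A : M → Matrix m m ℝ) (n : ℕ) (p : M) : EReal :=
  (((n : ℝ)⁻¹ : ℝ) : EReal) * elog (specRad (cocycle f A n p))

/-- The Anosov Closing property for a map of a metric space. -/
def AnosovClosing {M : Type*} [MetricSpace M] (f : M → M) : Prop :=
  ∃ C₁ ε₀ θ : ℝ, 0 < C₁ ∧ 0 < ε₀ ∧ 0 < θ ∧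
    ∀ (z : M) (n : ℕ), dist (f^[n] z) z < ε₀ →
      ∃ p : M, f^[n] p = p ∧ ∀ j ≤ n,
        dist (f^[j] z) (f^[j] p) ≤
          C₁ * Real.exp (-θ * min (j : ℝ) ((n : ℝ) - (j : ℝ))) * dist (f^[n] z) z

/-- `A` is `α`-Hölder continuous (w.r.t. the operator norm on matrices). -/
def IsHolderMat {M : Type*} [MetricSpace M] {m : Type*} [Fintype m] [DecidableEq m]
    (A : M → Matrix m m ℝ) (α : ℝ) : Prop :=
  ∃ C₂ : ℝ, 0 < C₂ ∧ ∀ x y : M, matNorm (A x - A y) ≤ C₂ * dist x y ^ α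

/-- The `i`-th compound (exterior power) matrix of `B`: the matrix of `ΛⁱB` acting on
`Λⁱ(ℝ^d)` in the standard basis of increasing wedges of basis vectors. -/
noncomputable def compound {d : ℕ} (i : ℕ) (B : Matrix (Fin d) (Fin d) ℝ) :
    Matrix {s : Finset (Fin d) // s.card = i} {s : Finset (Fin d) // s.card = i} ℝ :=
  Matrix.of fun S T => Matrix.det (Matrix.of fun a b : Fin i =>
    B (S.1.orderIsoOfFin S.2 a).1 (T.1.orderIsoOfFin T.2 b).1)


set_option linter.unusedSectionVars false

section MatNorm
open scoped Matrix.Norms.L2Operator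

variable {m : Type*} [Fintype m] [DecidableEq m]

lemma matNorm_eq (B : Matrix m m ℝ) : matNorm B = ‖B‖ := rfl

lemma matNorm_nonneg (B : Matrix m m ℝ) : 0 ≤ matNorm B := by
  rw [matNorm_eq]; exact norm_nonneg B

lemma matNorm_sub_le (B C D : Matrix m m ℝ) :
    matNorm (B - D) ≤ matNorm (B - C) + matNorm (C - D) := by
  simp only [matNorm_eq]; exact norm_sub_le_norm_sub_add_norm_sub B C D

lemma abs_entry_le_matNorm (B : Matrix m m ℝ) (i j : m) : |B i j| ≤ matNorm B := by
  rw [matNorm_eq]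
  set x : EuclideanSpace ℝ m := (WithLp.equiv 2 (m → ℝ)).symm (Pi.single j 1) with hxdef
  have h := Matrix.l2_opNorm_mulVec B x
  have hx : ‖x‖ = ‖(1:ℝ)‖ := PiLp.norm_toLp_single 2 (fun _ : m => ℝ) j 1
  set w : EuclideanSpace ℝ m := (EuclideanSpace.equiv m ℝ).symm (B.mulVec x) with hwdef
  have hB : |w i| ≤ ‖w‖ := by
    rw [EuclideanSpace.norm_eq w]
    have h1 : |w i| = Real.sqrt (‖w i‖ ^ 2) := by
      rw [Real.sqrt_sq_eq_abs, Real.norm_eq_abs, abs_abs]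
    rw [h1]
    apply Real.sqrt_le_sqrt
    exact Finset.single_le_sum (f := fun k => ‖w k‖ ^ 2)
      (fun k _ => sq_nonneg _) (Finset.mem_univ i)
  have hmv : w i = B i j := by
    have : w i = (B.mulVec (Pi.single j 1)) i := rfl
    rw [this, Matrix.mulVec_single]
    exact mul_one _
  rw [hmv] at hB
  calc |B i j| ≤ ‖w‖ := hB
    _ ≤ ‖B‖ * ‖x‖ := h
    _ = ‖B‖ := by rw [hx, norm_one, mul_one]


lemma matNorm_le_sub_add (B C : Matrix m m ℝ) :
    matNorm B ≤ matNorm (B - C) + matNorm C := by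
  simp only [matNorm_eq]
  have h := norm_add_le (B - C) C
  rwa [sub_add_cancel] at h

end MatNorm

section Det
variable {d : ℕ}

/-- The rows of a matrix, as an element of the pi (sup-norm) space. -/
def rowsOf (B : Matrix (Fin d) (Fin d) ℝ) : Fin d → Fin d → ℝ := fun i j => B i j

lemma det_multilinear_bound (m : Fin d → Fin d → ℝ) :
    ‖(Matrix.detRowAlternating (R := ℝ) (n := Fin d)).toMultilinearMap m‖ ≤
      (d.factorial : ℝ) * ∏ i, ‖m i‖ := by
  have h0 : (Matrix.detRowAlternating (R := ℝ) (n := Fin d)).toMultilinearMap m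
      = Matrix.det (Matrix.of m) := rfl
  rw [h0, Matrix.det_apply']
  calc ‖∑ σ : Equiv.Perm (Fin d), (Equiv.Perm.sign σ : ℝ) * ∏ i, Matrix.of m (σ i) i‖
      ≤ ∑ σ : Equiv.Perm (Fin d), ‖(Equiv.Perm.sign σ : ℝ) * ∏ i, Matrix.of m (σ i) i‖ :=
        norm_sum_le _ _
    _ ≤ ∑ _σ : Equiv.Perm (Fin d), ∏ i, ‖m i‖ := by
        apply Finset.sum_le_sum
        intro σ _
        rw [norm_mul]
        have hsign : ‖((Equiv.Perm.sign σ : ℤ) : ℝ)‖ = 1 := by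
          rcases Int.units_eq_one_or (Equiv.Perm.sign σ) with h | h <;> simp [h]
        rw [hsign, one_mul]
        have h1 : ‖∏ i, Matrix.of m (σ i) i‖ ≤ ∏ i, ‖m (σ i)‖ := by
          rw [norm_prod]
          apply Finset.prod_le_prod (fun i _ => norm_nonneg _)
          intro i _
          exact norm_le_pi_norm (m (σ i)) i
        exact le_trans h1 (le_of_eq (Equiv.prod_comp σ (fun i => ‖m i‖)))
    _ = (d.factorial : ℝ) * ∏ i, ‖m i‖ := by
        rw [Finset.sum_const, Finset.card_univ, Fintype.card_perm, Fintype.card_fin,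
          nsmul_eq_mul]

lemma pi_norm_le_matNorm (B : Matrix (Fin d) (Fin d) ℝ) : ‖rowsOf B‖ ≤ matNorm B := by
  refine pi_norm_le_iff_of_nonneg (matNorm_nonneg B) |>.2 fun i => ?_
  refine pi_norm_le_iff_of_nonneg (matNorm_nonneg B) |>.2 fun j => ?_
  exact abs_entry_le_matNorm B i j

lemma abs_det_sub_det_le {B C : Matrix (Fin d) (Fin d) ℝ} {K : ℝ}
    (hB : matNorm B ≤ K) (hC : matNorm C ≤ K) :
    |B.det - C.det| ≤ (d.factorial : ℝ) * d * K ^ (d - 1) * matNorm (B - C) := by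
  have hK : (0:ℝ) ≤ K := le_trans (matNorm_nonneg B) hB
  have h := MultilinearMap.norm_image_sub_le_of_bound
    (Matrix.detRowAlternating (R := ℝ) (n := Fin d)).toMultilinearMap
    (C := (d.factorial : ℝ)) (by positivity) det_multilinear_bound (rowsOf B) (rowsOf C)
  have hdet : (Matrix.detRowAlternating (R := ℝ) (n := Fin d)).toMultilinearMap (rowsOf B) -
      (Matrix.detRowAlternating (R := ℝ) (n := Fin d)).toMultilinearMap (rowsOf C)
      = B.det - C.det := rfl
  rw [hdet, Fintype.card_fin] at h
  have hsub : rowsOf B - rowsOf C = rowsOf (B - C) := rfl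
  rw [hsub] at h
  refine le_trans h ?_
  have hmax : max ‖rowsOf B‖ ‖rowsOf C‖ ≤ K :=
    max_le (le_trans (pi_norm_le_matNorm B) hB) (le_trans (pi_norm_le_matNorm C) hC)
  have h1 : max ‖rowsOf B‖ ‖rowsOf C‖ ^ (d - 1) ≤ K ^ (d - 1) :=
    pow_le_pow_left₀ (le_max_of_le_left (norm_nonneg _)) hmax _
  have h2 : ‖rowsOf (B - C)‖ ≤ matNorm (B - C) := pi_norm_le_matNorm (B - C)
  calc (d.factorial : ℝ) * d * max ‖rowsOf B‖ ‖rowsOf C‖ ^ (d - 1) * ‖rowsOf (B - C)‖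
      ≤ (d.factorial : ℝ) * d * K ^ (d - 1) * matNorm (B - C) := by
        apply mul_le_mul
        · apply mul_le_mul_of_nonneg_left h1 (by positivity)
        · exact h2
        · exact norm_nonneg _
        · positivity

lemma abs_det_le {B : Matrix (Fin d) (Fin d) ℝ} {K : ℝ} (hB : matNorm B ≤ K) :
    |B.det| ≤ (d.factorial : ℝ) * K ^ d := by
  have hK : (0:ℝ) ≤ K := le_trans (matNorm_nonneg B) hB
  have h := det_multilinear_bound (rowsOf B)
  have h0 : (Matrix.detRowAlternating (R := ℝ) (n := Fin d)).toMultilinearMap (rowsOf B)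
      = B.det := rfl
  rw [h0] at h
  refine le_trans h ?_
  have : ∏ i : Fin d, ‖rowsOf B i‖ ≤ ∏ _i : Fin d, K := by
    apply Finset.prod_le_prod (fun i _ => norm_nonneg _)
    intro i _
    exact le_trans (norm_le_pi_norm (rowsOf B) i) (le_trans (pi_norm_le_matNorm B) hB)
  rw [Finset.prod_const, Finset.card_univ, Fintype.card_fin] at this
  exact mul_le_mul_of_nonneg_left this (by positivity)

end Det

section Spec
variable {d : ℕ}

lemma multiset_pow_card_le_prod (s : Multiset ℝ) (r : ℝ) (hr : 0 ≤ r)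
    (h : ∀ x ∈ s, r ≤ x) : r ^ (Multiset.card s) ≤ s.prod := by
  induction s using Multiset.induction_on with
  | empty => simp
  | cons a s ih =>
    rw [Multiset.prod_cons, Multiset.card_cons, pow_succ, mul_comm]
    have ha : r ≤ a := h a (Multiset.mem_cons_self a s)
    have hs : r ^ (Multiset.card s) ≤ s.prod :=
      ih (fun x hx => h x (Multiset.mem_cons_of_mem hx))
    exact mul_le_mul ha hs (pow_nonneg hr _) (le_trans hr ha)

lemma root_charpoly_mem_spectrum (Bc : Matrix (Fin d) (Fin d) ℂ) (z : ℂ)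
    (hz : z ∈ (Matrix.charpoly Bc).roots) : z ∈ spectrum ℂ Bc := by
  have hne : Matrix.charpoly Bc ≠ 0 := (Matrix.charpoly_monic Bc).ne_zero
  have hroot : (Matrix.charpoly Bc).IsRoot z := (Polynomial.mem_roots hne).1 hz
  rw [spectrum.mem_iff]
  intro hunit
  have hdet : (algebraMap ℂ (Matrix (Fin d) (Fin d) ℂ) z - Bc).det
      = Polynomial.eval z (Matrix.charpoly Bc) := by
    rw [Matrix.charpoly, ← Polynomial.coe_evalRingHom, RingHom.map_det]
    congr 1
    ext i j
    by_cases hij : i = j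
    · subst hij
      simp [Matrix.charmatrix_apply_eq, Matrix.algebraMap_matrix_apply]
    · simp [Matrix.charmatrix_apply_ne _ _ _ hij, Matrix.algebraMap_matrix_apply, hij]
  have := (Matrix.isUnit_iff_isUnit_det _).1 hunit
  rw [hdet] at this
  rw [Polynomial.IsRoot.def] at hroot
  rw [hroot] at this
  exact (not_isUnit_zero : ¬ IsUnit (0:ℂ)) this

lemma pow_le_abs_det (B : Matrix (Fin d) (Fin d) ℝ) (r : ℝ) (hr : 0 ≤ r)
    (h : ∀ z ∈ spectrum ℂ (B.map (fun x => (x : ℂ))), r ≤ ‖z‖) :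
    r ^ d ≤ |B.det| := by
  set Bc : Matrix (Fin d) (Fin d) ℂ := B.map (fun x => (x : ℂ)) with hBc
  have hdet : Bc.det = (Matrix.charpoly Bc).roots.prod := Matrix.det_eq_prod_roots_charpoly Bc
  have hcard : Multiset.card (Matrix.charpoly Bc).roots = d := by
    have hsp : (Matrix.charpoly Bc).Splits := IsAlgClosed.splits _
    have hdeg : (Matrix.charpoly Bc).natDegree = d := by
      rw [Matrix.charpoly_natDegree_eq_dim, Fintype.card_fin]
    rw [(Polynomial.splits_iff_card_roots).1 hsp, hdeg]
  have habs : ‖Bc.det‖ = ((Matrix.charpoly Bc).roots.map (‖·‖)).prod := by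
    rw [hdet]
    exact map_multiset_prod (normHom (α := ℂ)) _
  have hlow : r ^ d ≤ ((Matrix.charpoly Bc).roots.map (‖·‖)).prod := by
    have hc : Multiset.card ((Matrix.charpoly Bc).roots.map (‖·‖)) = d := by
      rw [Multiset.card_map, hcard]
    have hstep := multiset_pow_card_le_prod ((Matrix.charpoly Bc).roots.map (‖·‖)) r hr ?_
    · rwa [hc] at hstep
    · intro x hx
      rcases Multiset.mem_map.1 hx with ⟨z, hz, rfl⟩
      exact h z (root_charpoly_mem_spectrum Bc z hz)
  have hBceq : Bc.det = ((B.det : ℝ) : ℂ) := by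
    rw [hBc]
    have : B.map (fun x => (x : ℂ)) = B.map Complex.ofRealHom := rfl
    rw [this]
    have h2 := (Complex.ofRealHom.map_det B).symm
    rw [RingHom.mapMatrix_apply] at h2
    exact h2.trans rfl
  rw [hBceq] at habs
  rw [Complex.norm_real, Real.norm_eq_abs] at habs
  rw [← habs] at hlow
  exact hlow

end Spec

lemma det_cocycle_eq_prod {M : Type*} {m : Type*} [Fintype m] [DecidableEq m]
    (f : M → M) (A : M → Matrix m m ℝ) (n : ℕ) (x : M) :
    (cocycle f A n x).det = ∏ j ∈ Finset.range n, (A (f^[j] x)).det := by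
  induction n generalizing x with
  | zero => simp [cocycle]
  | succ n ih =>
    rw [show cocycle f A (n+1) x = cocycle f A n (f x) * A x from rfl, Matrix.det_mul, ih (f x)]
    rw [Finset.prod_range_succ']
    simp [Function.iterate_succ_apply]

/-- Garsia's auxiliary maxima. -/
noncomputable def garsiaPhi {M : Type*} (f : M → M) (ψ : M → ℝ) : ℕ → M → ℝ
  | 0, _ => 0
  | N + 1, x => max 0 (ψ x + garsiaPhi f ψ N (f x))

section Garsia

variable {M : Type*} [MetricSpace M] [CompactSpace M] [MeasurableSpace M] [BorelSpace M]
  {f : M → M} {ψ : M → ℝ}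

lemma garsiaPhi_nonneg (N : ℕ) (x : M) : 0 ≤ garsiaPhi f ψ N x := by
  cases N with
  | zero => exact le_refl _
  | succ N => exact le_max_left _ _

lemma garsiaPhi_mono (N : ℕ) (x : M) : garsiaPhi f ψ N x ≤ garsiaPhi f ψ (N + 1) x := by
  induction N generalizing x with
  | zero => exact garsiaPhi_nonneg 1 x
  | succ N ih =>
    show max 0 _ ≤ max 0 _
    exact max_le_max (le_refl 0) (by linarith [ih (f x)])

lemma birkhoffSum_le_garsiaPhi (N k : ℕ) (hk : k ≤ N) (x : M) :
    birkhoffSum f ψ k x ≤ garsiaPhi f ψ N x := by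
  induction N generalizing k x with
  | zero =>
    rw [Nat.le_zero.1 hk]
    simp [birkhoffSum, garsiaPhi]
  | succ N ih =>
    cases k with
    | zero =>
      have : birkhoffSum f ψ 0 x = 0 := birkhoffSum_zero f ψ x
      rw [this]
      exact garsiaPhi_nonneg (N+1) x
    | succ k =>
      have h1 : birkhoffSum f ψ (k+1) x = ψ x + birkhoffSum f ψ k (f x) :=
        birkhoffSum_succ' f ψ k x
      rw [h1]
      have h2 : birkhoffSum f ψ k (f x) ≤ garsiaPhi f ψ N (f x) :=
        ih k (Nat.succ_le_succ_iff.1 hk) (f x)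
      calc ψ x + birkhoffSum f ψ k (f x) ≤ ψ x + garsiaPhi f ψ N (f x) := by linarith
        _ ≤ max 0 (ψ x + garsiaPhi f ψ N (f x)) := le_max_right _ _

lemma garsiaPhi_continuous (hf : Continuous f) (hψ : Continuous ψ) (N : ℕ) :
    Continuous (garsiaPhi f ψ N) := by
  induction N with
  | zero => exact continuous_const
  | succ N ih =>
    exact continuous_const.max (hψ.add (ih.comp hf))

lemma integrable_of_continuous {g : M → ℝ} (hg : Continuous g) (μ : Measure M)
    [IsFiniteMeasure μ] : Integrable g μ := by
  have hcs : HasCompactSupport g := by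
    apply HasCompactSupport.of_compactSpace
  exact hg.integrable_of_hasCompactSupport hcs

end Garsia


section GarsiaSec
variable {M : Type*} [MetricSpace M] [CompactSpace M] [MeasurableSpace M] [BorelSpace M]
  {f : M → M} {ψ : M → ℝ}

lemma pos_measure_of_neg_integral (μ : Measure M) [IsProbabilityMeasure μ]
    (hf : MeasurePreserving f μ μ) (hfc : Continuous f) (hψ : Continuous ψ)
    (hneg : ∫ x, ψ x ∂μ < 0) :
    0 < μ {x | ∀ N, garsiaPhi f ψ N x ≤ 0} := by
  have hΦc : ∀ N, Continuous (garsiaPhi f ψ N) := garsiaPhi_continuous hfc hψ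
  have hΦint : ∀ N, Integrable (garsiaPhi f ψ N) μ :=
    fun N => integrable_of_continuous (hΦc N) μ
  have hψint : Integrable ψ μ := integrable_of_continuous hψ μ
  set E : ℕ → Set M := fun N => {x | 0 < garsiaPhi f ψ N x} with hE
  have hEm : ∀ N, MeasurableSet (E N) :=
    fun N => measurableSet_lt measurable_const (hΦc N).measurable
  have hEmono : Monotone E := by
    apply monotone_nat_of_le_succ
    intro N x hx
    exact lt_of_lt_of_le hx (garsiaPhi_mono N x)
  have hcompint : ∀ N, Integrable (fun x => garsiaPhi f ψ N (f x)) μ :=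
    fun N => integrable_of_continuous ((hΦc N).comp hfc) μ
  have hcompeq : ∀ N, ∫ x, garsiaPhi f ψ N (f x) ∂μ = ∫ x, garsiaPhi f ψ N x ∂μ := by
    intro N
    conv_rhs => rw [← hf.map_eq]
    exact (integral_map hf.measurable.aemeasurable (hΦc N).aestronglyMeasurable).symm
  have key : ∀ N, 0 ≤ ∫ x in E N, ψ x ∂μ := by
    intro N
    cases N with
    | zero =>
      have : E 0 = ∅ := by
        ext x
        simp [hE, garsiaPhi]
      rw [this]
      simp
    | succ N =>
      set g : M → ℝ := fun x => garsiaPhi f ψ (N+1) x - garsiaPhi f ψ N (f x) with hg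
      have hgint : Integrable g μ := (hΦint (N+1)).sub (hcompint N)
      have heq : ∀ x ∈ E (N+1), ψ x = g x := by
        intro x hx
        have hx' : 0 < max 0 (ψ x + garsiaPhi f ψ N (f x)) := hx
        have h2 : 0 < ψ x + garsiaPhi f ψ N (f x) := by
          rcases lt_max_iff.1 hx' with h | h
          · exact absurd h (lt_irrefl 0)
          · exact h
        have h3 : garsiaPhi f ψ (N+1) x = ψ x + garsiaPhi f ψ N (f x) :=
          max_eq_right (le_of_lt h2)
        simp [hg, h3]
      have hiep : ∫ x in E (N+1), ψ x ∂μ = ∫ x in E (N+1), g x ∂μ :=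
        setIntegral_congr_fun (hEm (N+1)) heq
      have hneg' : ∫ x in (E (N+1))ᶜ, g x ∂μ ≤ 0 := by
        apply setIntegral_nonpos (hEm (N+1)).compl
        intro x hx
        have h1 : garsiaPhi f ψ (N+1) x ≤ 0 := not_lt.1 hx
        have h2 : garsiaPhi f ψ (N+1) x = 0 :=
          le_antisymm h1 (garsiaPhi_nonneg (N+1) x)
        have h3 : 0 ≤ garsiaPhi f ψ N (f x) := garsiaPhi_nonneg N (f x)
        simp only [hg]
        linarith
      have htot : ∫ x in E (N+1), g x ∂μ + ∫ x in (E (N+1))ᶜ, g x ∂μ = ∫ x, g x ∂μ :=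
        integral_add_compl (hEm (N+1)) hgint
      have hgpos : 0 ≤ ∫ x, g x ∂μ := by
        have h1 : ∫ x, g x ∂μ
            = (∫ x, garsiaPhi f ψ (N+1) x ∂μ) - ∫ x, garsiaPhi f ψ N (f x) ∂μ :=
          integral_sub (hΦint (N+1)) (hcompint N)
        rw [h1, hcompeq N, sub_nonneg]
        exact integral_mono (hΦint N) (hΦint (N+1)) (fun x => garsiaPhi_mono N x)
      rw [hiep]
      linarith
  have hlim : Tendsto (fun N => ∫ x in E N, ψ x ∂μ) atTop
      (𝓝 (∫ x in ⋃ N, E N, ψ x ∂μ)) :=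
    tendsto_setIntegral_of_monotone hEm hEmono hψint.integrableOn
  have hunion : 0 ≤ ∫ x in ⋃ N, E N, ψ x ∂μ := ge_of_tendsto' hlim key
  set G : Set M := {x | ∀ N, garsiaPhi f ψ N x ≤ 0} with hG
  have hGc : Gᶜ = ⋃ N, E N := by
    ext x
    simp only [hG, Set.mem_compl_iff, Set.mem_setOf_eq, Set.mem_iUnion, not_forall, not_le, hE]
  have hGm : MeasurableSet G := by
    have : MeasurableSet (⋃ N, E N) := MeasurableSet.iUnion (fun N => hEm N)
    rw [← hGc] at this
    simpa using this.compl
  rw [pos_iff_ne_zero]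
  intro hG0
  have hsplit : (∫ x in G, ψ x ∂μ) + ∫ x in Gᶜ, ψ x ∂μ = ∫ x, ψ x ∂μ :=
    integral_add_compl hGm hψint
  have hGz : ∫ x in G, ψ x ∂μ = 0 := by
    have : μ.restrict G = 0 := Measure.restrict_eq_zero.2 hG0
    rw [this]
    simp
  rw [hGz, zero_add, hGc] at hsplit
  rw [← hsplit] at hneg
  exact absurd hunion (not_le.2 hneg)

end GarsiaSec

lemma continuous_of_holder_bound {X : Type*} [MetricSpace X] (e : X → ℝ) (C α : ℝ)
    (hC : 0 < C) (hα : 0 < α) (h : ∀ x y, dist (e x) (e y) ≤ C * dist x y ^ α) :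
    Continuous e := by
  rw [Metric.continuous_iff]
  intro b ε hε
  refine ⟨(ε / (C + 1)) ^ α⁻¹, by positivity, fun a ha => ?_⟩
  have h1 : dist a b ^ α ≤ ((ε / (C + 1)) ^ α⁻¹ : ℝ) ^ α :=
    Real.rpow_le_rpow dist_nonneg (le_of_lt ha) (le_of_lt hα)
  rw [Real.rpow_inv_rpow (by positivity) (ne_of_gt hα)] at h1
  calc dist (e a) (e b) ≤ C * dist a b ^ α := h a b
    _ ≤ C * (ε / (C + 1)) := by
        apply mul_le_mul_of_nonneg_left h1 (le_of_lt hC)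
    _ < ε := by
        rw [mul_div_assoc']
        rw [div_lt_iff₀ (by positivity)]
        nlinarith


set_option maxHeartbeats 1000000 in
/-- **Corollary.** If `f` is a homeomorphism of a compact metric space satisfying the Anosov
Closing property, `A` is `α`-Hölder, and all Lyapunov exponents of `(f, A)` at periodic points
are uniformly bounded from below (every complex eigenvalue `z` of `Aⁿ(p)`, for `p` of period
`n`, satisfies `|z| ≥ e^{c n}`), then for every `f`-invariant Borel probability measure `μ`,
the matrix `A x` is invertible for `μ`-almost every `x`. -/
theorem invertible_ae_of_periodic_exponents_bounded_below
    {d : ℕ} {M : Type*} [MetricSpace M] [CompactSpace M] [MeasurableSpace M] [BorelSpace M]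
    (f : M → M) (hf : IsHomeomorph f) (hAC : AnosovClosing f)
    (α : ℝ) (hα : 0 < α) (A : M → Matrix (Fin d) (Fin d) ℝ) (hA : IsHolderMat A α)
    (c : ℝ)
    (hbound : ∀ (p : M) (n : ℕ), 1 ≤ n → f^[n] p = p →
      ∀ z ∈ spectrum ℂ ((cocycle f A n p).map (fun r => (r : ℂ))),
        Real.exp (c * n) ≤ ‖z‖) :
    ∀ μ : Measure M, IsProbabilityMeasure μ → MeasurePreserving f μ μ →
      ∀ᵐ x ∂μ, IsUnit (A x) := by

  intro μ hμ hpres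
  haveI := hμ
  rw [MeasureTheory.ae_iff]
  by_contra hS
  set S : Set M := {x | ¬ IsUnit (A x)} with hSdef
  obtain ⟨x₀, -⟩ : S.Nonempty := nonempty_of_measure_ne_zero hS
  obtain ⟨C₁, ε₀, θ, hC₁, hε₀, hθ, hclose⟩ := hAC
  obtain ⟨C₂, hC₂, hHo⟩ := hA
  have hfc : Continuous f := hf.continuous
  -- `A` is continuous
  have hAc : Continuous A := by
    apply continuous_matrix
    intro i j
    apply continuous_of_holder_bound _ C₂ α hC₂ hα
    intro x y
    have h1 : dist (A x i j) (A y i j) = |A x i j - A y i j| := Real.dist_eq _ _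
    have h2 : (A x - A y) i j = A x i j - A y i j := rfl
    rw [h1, ← h2]
    exact le_trans (abs_entry_le_matNorm _ i j) (hHo x y)
  have hdetc : Continuous (fun x => (A x).det) := hAc.matrix_det
  have hDc : Continuous (fun x => |(A x).det|) := hdetc.abs
  -- uniform bound on `matNorm (A x)`
  set K : ℝ := max (C₂ * Metric.diam (Set.univ : Set M) ^ α + matNorm (A x₀)) 1 with hKdef
  have hK1 : (1:ℝ) ≤ K := le_max_right _ _
  have hK0 : (0:ℝ) ≤ K := le_trans zero_le_one hK1
  have hK : ∀ x, matNorm (A x) ≤ K := by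
    intro x
    refine le_trans ?_ (le_max_left _ _)
    calc matNorm (A x) ≤ matNorm (A x - A x₀) + matNorm (A x₀) := matNorm_le_sub_add _ _
      _ ≤ C₂ * dist x x₀ ^ α + matNorm (A x₀) := add_le_add_left (hHo x x₀) _
      _ ≤ C₂ * Metric.diam (Set.univ : Set M) ^ α + matNorm (A x₀) := by
          have hd : dist x x₀ ≤ Metric.diam (Set.univ : Set M) :=
            Metric.dist_le_diam_of_mem isCompact_univ.isBounded trivial trivial
          have := Real.rpow_le_rpow dist_nonneg hd (le_of_lt hα)
          nlinarith
  set Kd : ℝ := (d.factorial : ℝ) * K ^ d with hKddef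
  have hKd0 : 0 ≤ Kd := by positivity
  have hDle : ∀ x, |(A x).det| ≤ Kd := fun x => abs_det_le (hK x)
  set L : ℝ := (d.factorial : ℝ) * d * K ^ (d - 1) * C₂ + 1 with hLdef
  have hL : 0 < L := by positivity
  have hDlip : ∀ x y : M, |(A x).det| ≤ |(A y).det| + L * dist x y ^ α := by
    intro x y
    have h1 : |(A x).det| - |(A y).det| ≤ |(A x).det - (A y).det| := abs_sub_abs_le_abs_sub _ _
    have h2 : |(A x).det - (A y).det|
        ≤ (d.factorial : ℝ) * d * K ^ (d - 1) * matNorm (A x - A y) :=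
      abs_det_sub_det_le (hK x) (hK y)
    have h3 : matNorm (A x - A y) ≤ C₂ * dist x y ^ α := hHo x y
    have h4 : (0:ℝ) ≤ dist x y ^ α := Real.rpow_nonneg dist_nonneg α
    have h5 : (0:ℝ) ≤ (d.factorial : ℝ) * d * K ^ (d - 1) := by positivity
    nlinarith [matNorm_nonneg (A x - A y)]
  -- measurability of S and positivity of its measure
  have hSm : MeasurableSet S := by
    have hSeq : S = (fun x => (A x).det) ⁻¹' {0} := by
      ext x
      simp only [hSdef, Set.mem_setOf_eq, Set.mem_preimage, Set.mem_singleton_iff,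
        Matrix.isUnit_iff_isUnit_det, isUnit_iff_ne_zero, not_not]
    rw [hSeq]
    exact hdetc.measurable (measurableSet_singleton 0)
  set s₀ : ℝ := (μ S).toReal with hs₀def
  have hs₀ : 0 < s₀ := ENNReal.toReal_pos hS (measure_ne_top μ S)
  have hs₀le : s₀ ≤ 1 := by
    rw [hs₀def]
    have h3 : μ S ≤ 1 := prob_le_one
    have h4 := ENNReal.toReal_mono ENNReal.one_ne_top h3
    simpa using h4
  -- choice of constants
  set R : ℝ := Real.log (Kd + 1) with hRdef
  have hR0 : 0 ≤ R := Real.log_nonneg (by linarith)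
  set η₁ : ℝ := Real.exp ((c * d - 1 - R) / s₀) with hη₁def
  have hη₁ : 0 < η₁ := Real.exp_pos _
  set ηt : ℝ := min η₁ 1 / 2 with hηtdef
  have hmin0 : 0 < min η₁ 1 := lt_min hη₁ zero_lt_one
  have hηt0 : 0 < ηt := by positivity
  have hηtlt : ηt < η₁ := lt_of_lt_of_le (half_lt_self hmin0) (min_le_left _ _)
  have hηt1 : ηt ≤ 1 := le_trans (le_of_lt (half_lt_self hmin0)) (min_le_right _ _)
  have hkey : s₀ * Real.log ηt + R < c * d - 1 := by
    have h1 : Real.log ηt < (c * d - 1 - R) / s₀ := by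
      have := Real.log_lt_log hηt0 hηtlt
      rwa [hη₁def, Real.log_exp] at this
    have h2 : s₀ * Real.log ηt < s₀ * ((c * d - 1 - R) / s₀) :=
      (mul_lt_mul_iff_right₀ hs₀).2 h1
    rw [mul_div_cancel₀ _ (ne_of_gt hs₀)] at h2
    linarith
  set δ : ℝ := C₁⁻¹ * (ηt / L) ^ (α⁻¹) with hδdef
  have hδ : 0 < δ := by positivity
  set η : ℝ := L * (C₁ * δ) ^ α with hηdef
  have hηeq : η = ηt := by
    have h1 : C₁ * δ = (ηt / L) ^ (α⁻¹) := by
      rw [hδdef, ← mul_assoc, mul_inv_cancel₀ (ne_of_gt hC₁), one_mul]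
    rw [hηdef, h1, Real.rpow_inv_rpow (by positivity) (ne_of_gt hα)]
    field_simp
  have hη0 : 0 < η := by rw [hηeq]; exact hηt0
  have hη1 : η ≤ 1 := by rw [hηeq]; exact hηt1
  -- the perturbed log function
  set gη : M → ℝ := fun x => Real.log (|(A x).det| + η) with hgdef
  have hgc : Continuous gη := by
    apply Continuous.log (hDc.add continuous_const)
    intro x
    have := abs_nonneg ((A x).det)
    exact ne_of_gt (add_pos_of_nonneg_of_pos this hη0)
  have hgint : Integrable gη μ := integrable_of_continuous hgc μ
  have hgR : ∀ x, gη x ≤ R := by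
    intro x
    rw [hgdef, hRdef]
    apply Real.log_le_log (add_pos_of_nonneg_of_pos (abs_nonneg _) hη0)
    have := hDle x
    linarith
  -- the integral of gη is small
  have hint : ∫ x, gη x ∂μ < c * d - 1 := by
    have hsplit : (∫ x in S, gη x ∂μ) + ∫ x in Sᶜ, gη x ∂μ = ∫ x, gη x ∂μ :=
      integral_add_compl hSm hgint
    have hSv : ∀ x ∈ S, gη x = Real.log η := by
      intro x hx
      have hdet0 : (A x).det = 0 := by
        by_contra hne
        exact hx ((Matrix.isUnit_iff_isUnit_det _).2 (isUnit_iff_ne_zero.2 hne))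
      simp [hgdef, hdet0]
    have hIS : ∫ x in S, gη x ∂μ = s₀ * Real.log η := by
      rw [setIntegral_congr_fun hSm hSv, setIntegral_const, smul_eq_mul, Measure.real]
    have hISc : ∫ x in Sᶜ, gη x ∂μ ≤ R := by
      have h1 : ∫ x in Sᶜ, gη x ∂μ ≤ ∫ _x in Sᶜ, R ∂μ := by
        apply setIntegral_mono_on hgint.integrableOn (integrableOn_const ?_)
          hSm.compl (fun x _ => hgR x)
        exact measure_ne_top μ _
      rw [setIntegral_const, smul_eq_mul, Measure.real] at h1
      have h2 : (μ Sᶜ).toReal ≤ 1 := by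
        have h3 : μ Sᶜ ≤ 1 := prob_le_one
        have h4 := ENNReal.toReal_mono ENNReal.one_ne_top h3
        simpa using h4
      have h5 : (μ Sᶜ).toReal * R ≤ 1 * R := mul_le_mul_of_nonneg_right h2 hR0
      linarith
    have hlogη : Real.log η = Real.log ηt := by rw [hηeq]
    rw [← hsplit, hIS, hlogη]
    linarith
  -- the auxiliary function ψ with negative integral
  set ψ : M → ℝ := fun x => gη x - (c * d - 1) with hψdef
  have hψc : Continuous ψ := hgc.sub continuous_const
  have hψneg : ∫ x, ψ x ∂μ < 0 := by
    rw [hψdef]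
    rw [integral_sub hgint (integrable_const _), integral_const]
    simp only [probReal_univ, one_smul]
    linarith
  set G : Set M := {x | ∀ N, garsiaPhi f ψ N x ≤ 0} with hGdef
  have hGpos : 0 < μ G := pos_measure_of_neg_integral μ hpres hfc hψc hψneg
  have hGm : MeasurableSet G := by
    have : G = ⋂ N, (garsiaPhi f ψ N) ⁻¹' Set.Iic 0 := by
      ext x; simp [hGdef]
    rw [this]
    exact MeasurableSet.iInter
      (fun N => (garsiaPhi_continuous hfc hψc N).measurable measurableSet_Iic)
  -- find a recurrent point in G with small return distance
  set r : ℝ := min δ ε₀ / 2 with hrdef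
  have hr : 0 < r := by positivity
  obtain ⟨t, ht⟩ : ∃ t : Finset M, Set.univ ⊆ ⋃ y ∈ t, Metric.ball y r := by
    apply isCompact_univ.elim_finite_subcover (fun y : M => Metric.ball y r)
      (fun y => Metric.isOpen_ball)
    intro x _
    exact Set.mem_iUnion.2 ⟨x, Metric.mem_ball_self hr⟩
  have hex : ∃ y ∈ t, μ (G ∩ Metric.ball y r) ≠ 0 := by
    by_contra hno
    push_neg at hno
    have h1 : G ⊆ ⋃ y ∈ t, (G ∩ Metric.ball y r) := by
      intro x hx
      rcases Set.mem_iUnion₂.1 (ht (Set.mem_univ x)) with ⟨y, hy, hxy⟩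
      exact Set.mem_iUnion₂.2 ⟨y, hy, hx, hxy⟩
    have h2 : μ G ≤ ∑ y ∈ t, μ (G ∩ Metric.ball y r) :=
      le_trans (measure_mono h1) (measure_biUnion_finset_le t _)
    rw [Finset.sum_congr rfl (fun y hy => hno y hy)] at h2
    simp at h2
    exact absurd h2 (ne_of_gt hGpos)
  obtain ⟨y, -, hμyb⟩ := hex
  have hsm : MeasurableSet (G ∩ Metric.ball y r) := hGm.inter Metric.isOpen_ball.measurableSet
  obtain ⟨x, hxs, n, hn0, hfnx⟩ :=
    hpres.conservative.exists_mem_iterate_mem hsm.nullMeasurableSet hμyb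
  have hn1 : 1 ≤ n := Nat.one_le_iff_ne_zero.2 hn0
  have hdistlt : dist (f^[n] x) x < min δ ε₀ := by
    have h1 : dist (f^[n] x) y < r := hfnx.2
    have h2 : dist x y < r := hxs.2
    have h3 : dist (f^[n] x) x ≤ dist (f^[n] x) y + dist y x := dist_triangle _ _ _
    have h4 : dist y x = dist x y := dist_comm y x
    have h5 : r + r = min δ ε₀ := by rw [hrdef]; ring
    linarith
  have hdist : dist (f^[n] x) x ≤ min δ ε₀ := le_of_lt hdistlt
  have hdistε : dist (f^[n] x) x < ε₀ := lt_of_lt_of_le hdistlt (min_le_right _ _)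
  obtain ⟨p, hp, hsh⟩ := hclose x n hdistε
  -- the eigenvalue bound at the periodic point p
  have hspec := hbound p n hn1 hp
  have h1 : Real.exp (c * n) ^ d ≤ |(cocycle f A n p).det| :=
    pow_le_abs_det _ _ (le_of_lt (Real.exp_pos _)) hspec
  have h2 : |(cocycle f A n p).det| = ∏ j ∈ Finset.range n, |(A (f^[j] p)).det| := by
    rw [det_cocycle_eq_prod, Finset.abs_prod]
  have h3 : ∀ j ∈ Finset.range n, |(A (f^[j] p)).det| ≤ |(A (f^[j] x)).det| + η := by
    intro j hj
    have hjn : j ≤ n := le_of_lt (Finset.mem_range.1 hj)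
    have hdj := hsh j hjn
    have hexp1 : Real.exp (-θ * min (j : ℝ) ((n : ℝ) - (j : ℝ))) ≤ 1 := by
      rw [Real.exp_le_one_iff]
      have hmin : 0 ≤ min (j : ℝ) ((n : ℝ) - (j : ℝ)) := by
        apply le_min (Nat.cast_nonneg j)
        have : (j : ℝ) ≤ (n : ℝ) := Nat.cast_le.2 hjn
        linarith
      nlinarith
    have hdd : dist (f^[j] x) (f^[j] p) ≤ C₁ * δ := by
      have hde : dist (f^[n] x) x ≤ δ := le_trans hdist (min_le_left _ _)
      have h6 : Real.exp (-θ * min (j : ℝ) ((n : ℝ) - (j : ℝ))) * dist (f^[n] x) x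
          ≤ 1 * δ := mul_le_mul hexp1 hde dist_nonneg zero_le_one
      have h7 : C₁ * (Real.exp (-θ * min (j : ℝ) ((n : ℝ) - (j : ℝ))) * dist (f^[n] x) x)
          ≤ C₁ * (1 * δ) := mul_le_mul_of_nonneg_left h6 (le_of_lt hC₁)
      calc dist (f^[j] x) (f^[j] p)
          ≤ C₁ * Real.exp (-θ * min (j : ℝ) ((n : ℝ) - (j : ℝ))) * dist (f^[n] x) x := hdj
        _ = C₁ * (Real.exp (-θ * min (j : ℝ) ((n : ℝ) - (j : ℝ))) * dist (f^[n] x) x) := by ring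
        _ ≤ C₁ * (1 * δ) := h7
        _ = C₁ * δ := by ring
    have h4 : dist (f^[j] p) (f^[j] x) ^ α ≤ (C₁ * δ) ^ α := by
      rw [dist_comm]
      exact Real.rpow_le_rpow dist_nonneg hdd (le_of_lt hα)
    calc |(A (f^[j] p)).det| ≤ |(A (f^[j] x)).det| + L * dist (f^[j] p) (f^[j] x) ^ α :=
        hDlip _ _
      _ ≤ |(A (f^[j] x)).det| + L * (C₁ * δ) ^ α := by nlinarith
      _ = |(A (f^[j] x)).det| + η := by rw [hηdef]
  have h4 : ∏ j ∈ Finset.range n, |(A (f^[j] p)).det|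
      ≤ ∏ j ∈ Finset.range n, (|(A (f^[j] x)).det| + η) :=
    Finset.prod_le_prod (fun j _ => abs_nonneg _) h3
  have h5 : ∏ j ∈ Finset.range n, (|(A (f^[j] x)).det| + η)
      = Real.exp (birkhoffSum f gη n x) := by
    rw [birkhoffSum, Real.exp_sum]
    apply Finset.prod_congr rfl
    intro j _
    rw [hgdef]
    rw [Real.exp_log (add_pos_of_nonneg_of_pos (abs_nonneg _) hη0)]
  have h6 : birkhoffSum f gη n x ≤ (c * d - 1) * n := by
    have hxG : x ∈ G := hxs.1
    have hb : birkhoffSum f ψ n x ≤ 0 :=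
      le_trans (birkhoffSum_le_garsiaPhi n n le_rfl x) (hxG n)
    have hsum : birkhoffSum f ψ n x = birkhoffSum f gη n x - n * (c * d - 1) := by
      rw [birkhoffSum, birkhoffSum, hψdef]
      rw [Finset.sum_sub_distrib, Finset.sum_const, Finset.card_range, nsmul_eq_mul]
    rw [hsum] at hb
    linarith
  -- contradiction
  have hfinal : Real.exp ((d : ℝ) * (c * n)) ≤ Real.exp ((c * d - 1) * n) := by
    have e1 : Real.exp ((d : ℝ) * (c * n)) = Real.exp (c * n) ^ d := by
      rw [← Real.exp_nat_mul]
    rw [e1]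
    calc Real.exp (c * n) ^ d ≤ |(cocycle f A n p).det| := h1
      _ = ∏ j ∈ Finset.range n, |(A (f^[j] p)).det| := h2
      _ ≤ ∏ j ∈ Finset.range n, (|(A (f^[j] x)).det| + η) := h4
      _ = Real.exp (birkhoffSum f gη n x) := h5
      _ ≤ Real.exp ((c * d - 1) * n) := Real.exp_le_exp.2 h6
  have hineq : (d : ℝ) * (c * n) ≤ (c * d - 1) * n := Real.exp_le_exp.1 hfinal
  have hncast : (1:ℝ) ≤ (n:ℝ) := by exact_mod_cast hn1
  nlinarith
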